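/- For every positive integer n, the sum over k from 1 to n of (k/(n+k)) * C(n+k, n-k) equals F_{2n}/2, where F_m is the m-th Fibonacci number. -/

import Mathlib

open Finset

lemma aux_nat_16 (n k : ℕ) (h1 : 1 ≤ k) (h2 : k ≤ n) :
    2 * k * Nat.choose (n + k) (n - k) = (n + k) * Nat.choose (n + k - 1) (n - k) := by
  have e1 : Nat.choose (n + k) (n - k) = Nat.choose (n + k) (2 * k) := by
    rw [show n - k = (n + k) - 2*k by omega]
    exact Nat.choose_symm (by omega)
  have e2 : Nat.choose (n + k - 1) (n - k) = Nat.choose (n + k - 1) (2 * k - 1) := by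
    rw [show n - k = (n + k - 1) - (2*k - 1) by omega]
    exact Nat.choose_symm (by omega)
  have h := Nat.add_one_mul_choose_eq (n + k - 1) (2 * k - 1)
  rw [show n+k-1+1 = n + k by omega, show 2*k-1+1 = 2*k by omega] at h
  rw [e1, e2, h]; ring

lemma aux_sum_16 (n : ℕ) (hn : 0 < n) :
    ∑ k ∈ Icc 1 n, Nat.choose (n + k - 1) (n - k) = Nat.fib (2 * n) := by
  rw [show 2*n = (2*n-1)+1 by omega, Nat.fib_succ_eq_sum_choose,
    Finset.Nat.sum_antidiagonal_eq_sum_range_succ_mk]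
  simp only []
  rw [show (2*n-1).succ = 2*n by omega]
  rw [range_eq_Ico, ← Finset.sum_Ico_consecutive _ (Nat.zero_le n) (by omega : n ≤ 2*n)]
  have h0 : ∑ i ∈ Ico 0 n, Nat.choose i (2*n-1-i) = 0 := by
    apply Finset.sum_eq_zero
    intro i hi
    simp only [mem_Ico] at hi
    exact Nat.choose_eq_zero_of_lt (by omega)
  rw [h0, zero_add]
  apply Finset.sum_nbij' (fun k => n + k - 1) (fun i => i - n + 1)
  · intro k hk; simp only [mem_Icc] at hk; simp only [mem_Ico]; omega
  · intro i hi; simp only [mem_Ico] at hi; simp only [mem_Icc]; omega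
  · intro k hk; simp only [mem_Icc] at hk; omega
  · intro i hi; simp only [mem_Ico] at hi; omega
  · intro k hk; simp only [mem_Icc] at hk
    congr 1; omega

theorem stmt_16 (n : ℕ) (hn : 0 < n) :
    ∑ k ∈ Icc 1 n, ((k : ℚ) / (n + k)) * (Nat.choose (n + k) (n - k)) =
    (Nat.fib (2 * n) : ℚ) / 2 := by
  rw [← aux_sum_16 n hn]
  push_cast
  rw [Finset.sum_div]
  apply Finset.sum_congr rfl
  intro k hk
  simp only [mem_Icc] at hk
  have h := aux_nat_16 n k hk.1 hk.2
  have hq := congrArg (fun m : ℕ => (m : ℚ)) h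
  push_cast at hq
  have hnk : (n : ℚ) + k ≠ 0 := by positivity
  field_simp
  linarith [hq]
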